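/- arXiv:1012.3132 — 2 statements merged into one kernel-verified Lean document; each statement's English description precedes it below -/
import Mathlib

section
/- Let (a_n) be a sequence of complex numbers such that sup_N (1/N) ∑_{n=1}^{N} |a_n|² < ∞ and such that sup_{ε ∈ [0,1)} |(1/N) ∑_{n=1}^{N} a_n e^{2πinε}| → 0 as N → ∞. Then for every measure-preserving system (Y, 𝓖, ν, S) on a probability space and every g ∈ L^∞(ν), the functions y ↦ (1/N) ∑_{n=1}^{N} a_n g(S^n y) converge to 0 in L²(ν) as N → ∞. -/
open MeasureTheory Filter Finset

noncomputable def ee (L : ℕ) (t : ℤ) : ℂ := Complex.exp (2 * Real.pi * Complex.I * t / L)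

lemma ee_add (L : ℕ) (s t : ℤ) : ee L s * ee L t = ee L (s + t) := by
  rw [ee, ee, ee, ← Complex.exp_add]; congr 1; push_cast; ring

lemma ee_conj (L : ℕ) (t : ℤ) : (starRingEnd ℂ) (ee L t) = ee L (-t) := by
  rw [ee, ee, ← Complex.exp_conj]
  simp [map_mul, map_div₀, Complex.conj_I, map_ofNat]

lemma ee_orth (L : ℕ) (hL : 0 < L) (m : ℤ) :
    ∑ j ∈ range L, ee L (m * j) = if (L : ℤ) ∣ m then (L : ℂ) else 0 := by
  have hLC : (L : ℂ) ≠ 0 := Nat.cast_ne_zero.2 hL.ne'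
  have hterm : ∀ j ∈ range L, ee L (m * j) = (ee L m) ^ j := by
    intro j _
    rw [ee, ee, ← Complex.exp_nat_mul]
    congr 1
    push_cast
    ring
  rw [Finset.sum_congr rfl hterm]
  have hpow : (ee L m) ^ L = 1 := by
    rw [ee, ← Complex.exp_nat_mul]
    have : (L : ℂ) * (2 * Real.pi * Complex.I * m / L) = m * (2 * Real.pi * Complex.I) := by
      field_simp
    rw [this, Complex.exp_int_mul_two_pi_mul_I]
  by_cases hdvd : (L : ℤ) ∣ m
  · obtain ⟨t, rfl⟩ := hdvd
    have h1 : ee L ((L : ℤ) * t) = 1 := by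
      rw [ee]
      have : 2 * (Real.pi : ℂ) * Complex.I * (((L : ℤ) * t : ℤ) : ℂ) / L = (t : ℤ) * (2 * Real.pi * Complex.I) := by
        push_cast
        field_simp
      rw [this, Complex.exp_int_mul_two_pi_mul_I]
    simp [h1, if_pos (dvd_mul_right _ _)]
  · rw [if_neg hdvd]
    have h2 : (2 * (Real.pi : ℂ) * Complex.I : ℂ) ≠ 0 := by
      simp [Real.pi_ne_zero, Complex.I_ne_zero]
    have hne : ee L m ≠ 1 := by
      intro h
      rw [ee, Complex.exp_eq_one_iff] at h
      obtain ⟨n, hn⟩ := h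
      apply hdvd
      have key : (2 * (Real.pi : ℂ) * Complex.I) * (m : ℂ) = (2 * Real.pi * Complex.I) * ((n : ℂ) * L) := by
        have h' : 2 * (Real.pi : ℂ) * Complex.I * m / L * L = (n : ℂ) * (2 * Real.pi * Complex.I) * L := by rw [hn]
        rw [div_mul_cancel₀ _ hLC] at h'
        linear_combination h'
      have : (m : ℂ) = (n : ℂ) * L := mul_left_cancel₀ h2 key
      exact ⟨n, by exact_mod_cast (mul_comm (n : ℂ) (L : ℂ) ▸ this)⟩
    rw [geom_sum_eq hne, hpow]
    simp


-- key coefficient extraction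
lemma key_extract (N L : ℕ) (hL : 0 < L) (hNL : N < L) (a c : ℕ → ℂ)
    (k' : ℕ) (hk' : k' ∈ range (L - N)) :
    ∑ j ∈ range L, ((∑ n ∈ Icc 1 N, a n * ee L ((n : ℤ) * j)) *
        (∑ k ∈ range L, c k * ee L (-((k : ℤ) * j)))) * ee L ((k' : ℤ) * j)
      = (L : ℂ) * ∑ n ∈ Icc 1 N, a n * c (n + k') := by
  have hk'lt : k' < L - N := mem_range.1 hk'
  have step1 : ∀ j ∈ range L,
      ((∑ n ∈ Icc 1 N, a n * ee L ((n : ℤ) * j)) *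
        (∑ k ∈ range L, c k * ee L (-((k : ℤ) * j)))) * ee L ((k' : ℤ) * j)
      = ∑ n ∈ Icc 1 N, ∑ k ∈ range L, (a n * c k) * ee L (((n : ℤ) - k + k') * j) := by
    intro j _
    rw [sum_mul, sum_mul]
    refine sum_congr rfl fun n _ => ?_
    rw [mul_sum, sum_mul]
    refine sum_congr rfl fun k _ => ?_
    calc a n * ee L ((n : ℤ) * j) * (c k * ee L (-((k : ℤ) * j))) * ee L ((k' : ℤ) * j)
        = (a n * c k) * (ee L ((n : ℤ) * j) * ee L (-((k : ℤ) * j)) * ee L ((k' : ℤ) * j)) := by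
          ring
      _ = (a n * c k) * ee L (((n : ℤ) - k + k') * j) := by
          rw [ee_add, ee_add]; congr 1; ring
  rw [sum_congr rfl step1, Finset.sum_comm]
  have step2 : ∀ n ∈ Icc 1 N,
      ∑ j ∈ range L, ∑ k ∈ range L, (a n * c k) * ee L (((n : ℤ) - k + k') * j)
        = (L : ℂ) * (a n * c (n + k')) := by
    intro n hn
    obtain ⟨hn1, hn2⟩ := mem_Icc.1 hn
    rw [Finset.sum_comm]
    have inner : ∀ k ∈ range L,
        ∑ j ∈ range L, (a n * c k) * ee L (((n : ℤ) - k + k') * j)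
          = (a n * c k) * (if (L : ℤ) ∣ ((n : ℤ) - k + k') then (L : ℂ) else 0) := by
      intro k _
      rw [← mul_sum, ee_orth L hL]
    rw [sum_congr rfl inner]
    rw [Finset.sum_eq_single (n + k')]
    · have : ((n : ℤ) - (n + k' : ℕ) + k') = 0 := by push_cast; ring
      rw [this]
      simp [mul_comm]
    · intro k hk hne
      have hklt : k < L := mem_range.1 hk
      have : ¬ ((L : ℤ) ∣ ((n : ℤ) - k + k')) := by
        intro hdvd
        have habs : |(n : ℤ) - k + k'| < L := by
          rw [abs_lt]
          omega
        have := Int.eq_zero_of_abs_lt_dvd hdvd habs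
        apply hne
        omega
      rw [if_neg this, mul_zero]
    · intro hmem
      exfalso
      apply hmem
      rw [mem_range]
      omega
  rw [sum_congr rfl step2, ← mul_sum]

lemma normsq_helper (z : ℂ) : z * (starRingEnd ℂ) z = ((‖z‖ ^ 2 : ℝ) : ℂ) := by
  rw [Complex.mul_conj]
  norm_cast
  rw [Complex.normSq_eq_norm_sq]

lemma sum_mul_conj_eq (s : Finset ℕ) (f : ℕ → ℂ) :
    ∑ x ∈ s, f x * (starRingEnd ℂ) (f x) = ((∑ x ∈ s, ‖f x‖ ^ 2 : ℝ) : ℂ) := by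
  rw [Complex.ofReal_sum]
  exact sum_congr rfl fun x _ => normsq_helper (f x)

lemma sum_conj_orth (L m0 : ℕ) (hL : 0 < L) (hm0 : m0 ≤ L) (b : ℕ → ℂ) :
    ∑ j ∈ range L, ((∑ k ∈ range m0, b k * ee L (-((k : ℤ) * j))) *
        (starRingEnd ℂ) (∑ k ∈ range m0, b k * ee L (-((k : ℤ) * j))))
      = (L : ℂ) * ∑ k ∈ range m0, b k * (starRingEnd ℂ) (b k) := by
  have hconj : ∀ j : ℕ, (starRingEnd ℂ) (∑ k ∈ range m0, b k * ee L (-((k : ℤ) * j)))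
      = ∑ k ∈ range m0, (starRingEnd ℂ) (b k) * ee L ((k : ℤ) * j) := by
    intro j
    simp only [map_sum, map_mul, ee_conj, neg_neg]
  have step1 : ∀ j ∈ range L,
      ((∑ k ∈ range m0, b k * ee L (-((k : ℤ) * j))) *
        (starRingEnd ℂ) (∑ k ∈ range m0, b k * ee L (-((k : ℤ) * j))))
      = ∑ k ∈ range m0, ∑ k'' ∈ range m0,
          (b k * (starRingEnd ℂ) (b k'')) * ee L (((k'' : ℤ) - k) * j) := by
    intro j _
    rw [hconj j, sum_mul]
    refine sum_congr rfl fun k _ => ?_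
    rw [mul_sum]
    refine sum_congr rfl fun k'' _ => ?_
    calc b k * ee L (-((k : ℤ) * j)) * ((starRingEnd ℂ) (b k'') * ee L ((k'' : ℤ) * j))
        = (b k * (starRingEnd ℂ) (b k'')) * (ee L (-((k : ℤ) * j)) * ee L ((k'' : ℤ) * j)) := by
          ring
      _ = (b k * (starRingEnd ℂ) (b k'')) * ee L (((k'' : ℤ) - k) * j) := by
          rw [ee_add]; congr 1; ring
  rw [sum_congr rfl step1, Finset.sum_comm]
  have step2 : ∀ k ∈ range m0,
      ∑ j ∈ range L, ∑ k'' ∈ range m0, (b k * (starRingEnd ℂ) (b k'')) * ee L (((k'' : ℤ) - k) * j)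
        = (L : ℂ) * (b k * (starRingEnd ℂ) (b k)) := by
    intro k hk
    have hklt : k < m0 := mem_range.1 hk
    rw [Finset.sum_comm]
    have inner : ∀ k'' ∈ range m0,
        ∑ j ∈ range L, (b k * (starRingEnd ℂ) (b k'')) * ee L (((k'' : ℤ) - k) * j)
          = (b k * (starRingEnd ℂ) (b k'')) * (if (L : ℤ) ∣ ((k'' : ℤ) - k) then (L : ℂ) else 0) := by
      intro k'' _
      rw [← mul_sum, ee_orth L hL]
    rw [sum_congr rfl inner]
    rw [Finset.sum_eq_single k]
    · simp [mul_comm]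
    · intro k'' hk'' hne
      have hlt : k'' < m0 := mem_range.1 hk''
      have : ¬ ((L : ℤ) ∣ ((k'' : ℤ) - k)) := by
        intro hdvd
        have habs : |(k'' : ℤ) - k| < L := by rw [abs_lt]; omega
        have := Int.eq_zero_of_abs_lt_dvd hdvd habs
        apply hne; omega
      rw [if_neg this, mul_zero]
    · intro hmem; exact absurd hk hmem
  rw [sum_congr rfl step2, ← mul_sum]

lemma core (N L : ℕ) (hL : 0 < L) (hNL : N < L) (a c : ℕ → ℂ) (W : ℝ)
    (hA : ∀ j ∈ range L, ‖∑ n ∈ Icc 1 N, a n * ee L ((n : ℤ) * j)‖ ≤ W) :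
    ∑ k ∈ range (L - N), ‖∑ n ∈ Icc 1 N, a n * c (n + k)‖ ^ 2
      ≤ W ^ 2 * ∑ k ∈ range L, ‖c k‖ ^ 2 := by
  have hW0 : 0 ≤ W := le_trans (norm_nonneg _) (hA 0 (mem_range.2 hL))
  set A : ℕ → ℂ := fun j => ∑ n ∈ Icc 1 N, a n * ee L ((n : ℤ) * j) with hA_def
  set C : ℕ → ℂ := fun j => ∑ k ∈ range L, c k * ee L (-((k : ℤ) * j)) with hC_def
  set P : ℕ → ℂ := fun j => A j * C j with hP_def
  set b : ℕ → ℂ := fun k' => ∑ n ∈ Icc 1 N, a n * c (n + k') with hb_def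
  have hkey : ∀ k' ∈ range (L - N),
      ∑ j ∈ range L, P j * ee L ((k' : ℤ) * j) = (L : ℂ) * b k' :=
    fun k' hk' => key_extract N L hL hNL a c k' hk'
  set Q : ℕ → ℂ := fun j => ∑ k' ∈ range (L - N), b k' * ee L (-((k' : ℤ) * j)) with hQ_def
  have hconjQ : ∀ j : ℕ, (starRingEnd ℂ) (Q j)
      = ∑ k' ∈ range (L - N), (starRingEnd ℂ) (b k') * ee L ((k' : ℤ) * j) := by
    intro j
    rw [hQ_def]
    simp only [map_sum, map_mul, ee_conj, neg_neg]
  have hPQ : ∑ j ∈ range L, P j * (starRingEnd ℂ) (Q j)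
      = (L : ℂ) * ∑ k' ∈ range (L - N), b k' * (starRingEnd ℂ) (b k') := by
    calc ∑ j ∈ range L, P j * (starRingEnd ℂ) (Q j)
        = ∑ j ∈ range L, ∑ k' ∈ range (L - N),
            (starRingEnd ℂ) (b k') * (P j * ee L ((k' : ℤ) * j)) := by
          refine sum_congr rfl fun j _ => ?_
          rw [hconjQ j, mul_sum]
          exact sum_congr rfl fun k' _ => by ring
      _ = ∑ k' ∈ range (L - N), (starRingEnd ℂ) (b k') *
            ∑ j ∈ range L, P j * ee L ((k' : ℤ) * j) := by
          rw [Finset.sum_comm]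
          exact sum_congr rfl fun k' _ => by rw [mul_sum]
      _ = ∑ k' ∈ range (L - N), (starRingEnd ℂ) (b k') * ((L : ℂ) * b k') :=
          sum_congr rfl fun k' hk' => by rw [hkey k' hk']
      _ = (L : ℂ) * ∑ k' ∈ range (L - N), b k' * (starRingEnd ℂ) (b k') := by
          rw [mul_sum]
          exact sum_congr rfl fun k' _ => by ring
  have hQP : ∑ j ∈ range L, Q j * (starRingEnd ℂ) (P j)
      = (L : ℂ) * ∑ k' ∈ range (L - N), b k' * (starRingEnd ℂ) (b k') := by
    have h1 := congrArg (starRingEnd ℂ) hPQ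
    simp only [map_sum, map_mul, Complex.conj_conj, map_natCast] at h1
    calc ∑ j ∈ range L, Q j * (starRingEnd ℂ) (P j)
        = ∑ j ∈ range L, (starRingEnd ℂ) (P j) * Q j :=
          sum_congr rfl fun j _ => mul_comm _ _
      _ = (L : ℂ) * ∑ k' ∈ range (L - N), (starRingEnd ℂ) (b k') * b k' := h1
      _ = (L : ℂ) * ∑ k' ∈ range (L - N), b k' * (starRingEnd ℂ) (b k') := by
          congr 1
          exact sum_congr rfl fun _ _ => mul_comm _ _
  have hQQ : ∑ j ∈ range L, Q j * (starRingEnd ℂ) (Q j)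
      = (L : ℂ) * ∑ k' ∈ range (L - N), b k' * (starRingEnd ℂ) (b k') :=
    sum_conj_orth L (L - N) hL (Nat.sub_le L N) b
  have expand : ∑ j ∈ range L, (P j - Q j) * (starRingEnd ℂ) (P j - Q j)
      = ∑ j ∈ range L, P j * (starRingEnd ℂ) (P j)
        - (L : ℂ) * ∑ k' ∈ range (L - N), b k' * (starRingEnd ℂ) (b k') := by
    have hterm : ∀ j ∈ range L, (P j - Q j) * (starRingEnd ℂ) (P j - Q j)
        = P j * (starRingEnd ℂ) (P j) - P j * (starRingEnd ℂ) (Q j)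
          - Q j * (starRingEnd ℂ) (P j) + Q j * (starRingEnd ℂ) (Q j) := by
      intro j _
      rw [map_sub]
      ring
    rw [sum_congr rfl hterm]
    simp only [Finset.sum_add_distrib, Finset.sum_sub_distrib]
    rw [hPQ, hQP, hQQ]
    ring
  -- convert to real statement
  have hrealPQ : (∑ j ∈ range L, ‖P j - Q j‖ ^ 2 : ℝ)
      = ∑ j ∈ range L, ‖P j‖ ^ 2 - (L : ℝ) * ∑ k' ∈ range (L - N), ‖b k'‖ ^ 2 := by
    have := expand
    rw [sum_mul_conj_eq (range L) (fun j => P j - Q j),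
        sum_mul_conj_eq (range L) P, sum_mul_conj_eq (range (L - N)) b] at this
    exact_mod_cast this
  have hbessel : (L : ℝ) * ∑ k' ∈ range (L - N), ‖b k'‖ ^ 2 ≤ ∑ j ∈ range L, ‖P j‖ ^ 2 := by
    have h0 : (0 : ℝ) ≤ ∑ j ∈ range L, ‖P j - Q j‖ ^ 2 :=
      Finset.sum_nonneg fun j _ => sq_nonneg _
    linarith [hrealPQ]
  have hparseval : ∑ j ∈ range L, ‖C j‖ ^ 2 = (L : ℝ) * ∑ k ∈ range L, ‖c k‖ ^ 2 := by
    have := sum_conj_orth L L hL le_rfl c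
    rw [sum_mul_conj_eq (range L) C, sum_mul_conj_eq (range L) c] at this
    exact_mod_cast this
  have hPbound : ∑ j ∈ range L, ‖P j‖ ^ 2 ≤ W ^ 2 * ((L : ℝ) * ∑ k ∈ range L, ‖c k‖ ^ 2) := by
    rw [← hparseval, mul_sum]
    refine Finset.sum_le_sum fun j hj => ?_
    rw [hP_def]
    simp only
    rw [norm_mul, mul_pow]
    have h1 : ‖A j‖ ^ 2 ≤ W ^ 2 := by
      have := hA j hj
      nlinarith [norm_nonneg (A j)]
    nlinarith [norm_nonneg (C j), sq_nonneg (‖C j‖)]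
  have hLpos : (0 : ℝ) < L := by exact_mod_cast hL
  have final : (L : ℝ) * ∑ k' ∈ range (L - N), ‖b k'‖ ^ 2
      ≤ (L : ℝ) * (W ^ 2 * ∑ k ∈ range L, ‖c k‖ ^ 2) := by
    calc (L : ℝ) * ∑ k' ∈ range (L - N), ‖b k'‖ ^ 2 ≤ ∑ j ∈ range L, ‖P j‖ ^ 2 := hbessel
      _ ≤ W ^ 2 * ((L : ℝ) * ∑ k ∈ range L, ‖c k‖ ^ 2) := hPbound
      _ = (L : ℝ) * (W ^ 2 * ∑ k ∈ range L, ‖c k‖ ^ 2) := by ring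
  exact le_of_mul_le_mul_left final hLpos


lemma eLpNorm_le_of_sq {Y : Type} [MeasurableSpace Y] (ν : Measure Y) (f : Y → ℂ) (B : ℝ) (hB : 0 ≤ B)
    (h : ∫⁻ y, ENNReal.ofReal (‖f y‖ ^ 2) ∂ν ≤ ENNReal.ofReal (B ^ 2)) :
    eLpNorm f 2 ν ≤ ENNReal.ofReal B := by
  rw [MeasureTheory.eLpNorm_eq_lintegral_rpow_enorm_toReal (by norm_num) (by norm_num)]
  have htoReal : (2 : ENNReal).toReal = 2 := by norm_num
  have hpt : ∀ y, ‖f y‖ₑ ^ (2 : ENNReal).toReal = ENNReal.ofReal (‖f y‖ ^ 2) := by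
    intro y
    rw [htoReal, ← ofReal_norm,
      show (2 : ℝ) = ((2 : ℕ) : ℝ) by norm_num, ENNReal.rpow_natCast,
      ← ENNReal.ofReal_pow (norm_nonneg _)]
  simp only [hpt]
  calc (∫⁻ y, ENNReal.ofReal (‖f y‖ ^ 2) ∂ν) ^ (1 / (2 : ENNReal).toReal)
      ≤ (ENNReal.ofReal (B ^ 2)) ^ (1 / (2 : ENNReal).toReal) :=
        ENNReal.rpow_le_rpow h (by rw [htoReal]; norm_num)
    _ = ENNReal.ofReal B := by
        rw [htoReal, ENNReal.ofReal_rpow_of_nonneg (sq_nonneg B) (by norm_num)]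
        congr 1
        rw [← Real.rpow_natCast B 2, ← Real.rpow_mul hB]
        norm_num


/-- If `(a_n)` has bounded quadratic Cesàro averages and its Wiener–Wintner suprema
`sup_{ε ∈ [0,1)} |(1/N) ∑_{n=1}^N a_n e^{2πinε}|` tend to `0`, then for every probability
measure-preserving system `(Y, ν, S)` and every `g ∈ L^∞(ν)` the averages
`(1/N) ∑_{n=1}^N a_n g(S^n y)` converge to `0` in `L²(ν)`. -/
theorem wiener_wintner_implies_L2_return_times (a : ℕ → ℂ)
    (hbound : ∃ M : ℝ, ∀ N : ℕ, 1 ≤ N → (N : ℝ)⁻¹ * ∑ n ∈ Icc 1 N, ‖a n‖ ^ 2 ≤ M)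
    (hWW : Tendsto (fun N : ℕ => ⨆ ε ∈ Set.Ico (0 : ℝ) 1,
        ‖(N : ℂ)⁻¹ * ∑ n ∈ Icc 1 N, a n * Complex.exp (2 * Real.pi * Complex.I * n * ε)‖)
      atTop (nhds 0)) :
    ∀ (Y : Type) [MeasurableSpace Y] (ν : Measure Y), IsProbabilityMeasure ν →
      ∀ S : Y → Y, MeasurePreserving S ν ν →
      ∀ g : Y → ℂ, Measurable g → (∃ D : ℝ, ∀ y, ‖g y‖ ≤ D) →
      Tendsto
        (fun N : ℕ => eLpNorm (fun y => (N : ℂ)⁻¹ * ∑ n ∈ Icc 1 N, a n * g (S^[n] y)) 2 ν)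
        atTop (nhds 0) := by
  intro Y _ ν hν S hS g hg hDex
  obtain ⟨D, hD⟩ := hDex
  set D' : ℝ := |D| with hD'_def
  have hD' : ∀ y, ‖g y‖ ≤ D' := fun y => (hD y).trans (le_abs_self D)
  have hD'0 : 0 ≤ D' := abs_nonneg D
  set W : ℕ → ℝ := fun N => ⨆ ε ∈ Set.Ico (0 : ℝ) 1,
      ‖(N : ℂ)⁻¹ * ∑ n ∈ Icc 1 N, a n * Complex.exp (2 * Real.pi * Complex.I * n * ε)‖ with hW_def
  -- basic facts about W
  have hnorm1 : ∀ (N : ℕ) (ε : ℝ),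
      ‖(N : ℂ)⁻¹ * ∑ n ∈ Icc 1 N, a n * Complex.exp (2 * Real.pi * Complex.I * n * ε)‖
        ≤ (N : ℝ)⁻¹ * ∑ n ∈ Icc 1 N, ‖a n‖ := by
    intro N ε
    rw [norm_mul, norm_inv, Complex.norm_natCast]
    refine mul_le_mul_of_nonneg_left ?_ (by positivity)
    refine (norm_sum_le _ _).trans (Finset.sum_le_sum fun n _ => ?_)
    rw [norm_mul]
    have hexp : ‖Complex.exp (2 * Real.pi * Complex.I * n * ε)‖ = 1 := by
      rw [show (2 * Real.pi * Complex.I * n * ε : ℂ) = ((2 * Real.pi * n * ε : ℝ) : ℂ) * Complex.I by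
        push_cast; ring]
      exact Complex.norm_exp_ofReal_mul_I _
    rw [hexp, mul_one]
  have hWle : ∀ (N : ℕ) (ε : ℝ), ε ∈ Set.Ico (0 : ℝ) 1 →
      ‖(N : ℂ)⁻¹ * ∑ n ∈ Icc 1 N, a n * Complex.exp (2 * Real.pi * Complex.I * n * ε)‖ ≤ W N := by
    intro N ε hε
    have hbdd : BddAbove (Set.range fun ε : ℝ => ⨆ _ : ε ∈ Set.Ico (0 : ℝ) 1,
        ‖(N : ℂ)⁻¹ * ∑ n ∈ Icc 1 N, a n * Complex.exp (2 * Real.pi * Complex.I * n * ε)‖) := by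
      refine ⟨(N : ℝ)⁻¹ * ∑ n ∈ Icc 1 N, ‖a n‖, ?_⟩
      rintro x ⟨ε', rfl⟩
      dsimp only
      by_cases h : ε' ∈ Set.Ico (0 : ℝ) 1
      · rw [ciSup_pos h]
        exact hnorm1 N ε'
      · have : IsEmpty (ε' ∈ Set.Ico (0 : ℝ) 1) := ⟨h⟩
        rw [Real.iSup_of_isEmpty]
        positivity
    have h1 := le_ciSup hbdd ε
    rwa [ciSup_pos hε] at h1
  have hW0 : ∀ N, 0 ≤ W N :=
    fun N => Real.iSup_nonneg fun ε => Real.iSup_nonneg fun _ => norm_nonneg _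
  -- the quantitative bound for N ≥ 1
  have keybound : ∀ N : ℕ, 1 ≤ N →
      eLpNorm (fun y => (N : ℂ)⁻¹ * ∑ n ∈ Icc 1 N, a n * g (S^[n] y)) 2 ν
        ≤ ENNReal.ofReal (Real.sqrt 2 * D' * W N) := by
    intro N hN
    set L : ℕ := 2 * N with hL_def
    have hL : 0 < L := by omega
    have hNL : N < L := by omega
    have hLN : L - N = N := by omega
    have hNC : ((N : ℂ)) ≠ 0 := Nat.cast_ne_zero.2 (by omega)
    have hNR : (0 : ℝ) < N := by exact_mod_cast hN
    -- bound on character sums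
    have hAj : ∀ j ∈ range L, ‖∑ n ∈ Icc 1 N, a n * ee L ((n : ℤ) * j)‖ ≤ (N : ℝ) * W N := by
      intro j hj
      have hjL : j < L := mem_range.1 hj
      set ε : ℝ := (j : ℝ) / L with hε_def
      have hε : ε ∈ Set.Ico (0 : ℝ) 1 := by
        constructor
        · positivity
        · rw [div_lt_one (by exact_mod_cast hL)]
          exact_mod_cast hjL
      have heq : ∀ n : ℕ, ee L ((n : ℤ) * j) = Complex.exp (2 * Real.pi * Complex.I * n * ε) := by
        intro n
        rw [ee]
        congr 1
        have hLC : ((L : ℂ)) ≠ 0 := Nat.cast_ne_zero.2 hL.ne'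
        field_simp [hε_def]
        rw [hε_def]
        push_cast
        field_simp
      have h2 := hWle N ε hε
      rw [norm_mul, norm_inv, Complex.norm_natCast] at h2
      calc ‖∑ n ∈ Icc 1 N, a n * ee L ((n : ℤ) * j)‖
          = ‖∑ n ∈ Icc 1 N, a n * Complex.exp (2 * Real.pi * Complex.I * n * ε)‖ := by
            congr 1; exact Finset.sum_congr rfl fun n _ => by rw [heq n]
        _ ≤ (N : ℝ) * W N := by
            rw [← mul_inv_cancel_left₀ hNR.ne' ‖∑ n ∈ Icc 1 N, a n * Complex.exp (2 * Real.pi * Complex.I * n * ε)‖]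
            exact mul_le_mul_of_nonneg_left h2 (le_of_lt hNR)
    -- pointwise inequality from core
    have hpt : ∀ y : Y, ∑ k ∈ range N, ‖(N : ℂ)⁻¹ * ∑ n ∈ Icc 1 N, a n * g (S^[n + k] y)‖ ^ 2
        ≤ 2 * N * D' ^ 2 * W N ^ 2 := by
      intro y
      have hcore := core N L hL hNL a (fun k => g (S^[k] y)) ((N : ℝ) * W N) hAj
      rw [hLN] at hcore
      have hcbound : ∑ k ∈ range L, ‖g (S^[k] y)‖ ^ 2 ≤ (L : ℝ) * D' ^ 2 := by
        have := Finset.sum_le_card_nsmul (range L) (fun k => ‖g (S^[k] y)‖ ^ 2) (D' ^ 2)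
          (fun k _ => by
            have := hD' (S^[k] y)
            nlinarith [norm_nonneg (g (S^[k] y))])
        simpa [nsmul_eq_mul] using this
      have hsum : ∑ k ∈ range N, ‖(N : ℂ)⁻¹ * ∑ n ∈ Icc 1 N, a n * g (S^[n + k] y)‖ ^ 2
          = (N : ℝ)⁻¹ ^ 2 * ∑ k ∈ range N, ‖∑ n ∈ Icc 1 N, a n * g (S^[n + k] y)‖ ^ 2 := by
        rw [Finset.mul_sum]
        refine Finset.sum_congr rfl fun k _ => ?_
        rw [norm_mul, norm_inv, Complex.norm_natCast, mul_pow]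
      rw [hsum]
      have hLcast : ((L : ℝ)) = 2 * N := by push_cast [hL_def]; ring
      have hW0N := hW0 N
      calc (N : ℝ)⁻¹ ^ 2 * ∑ k ∈ range N, ‖∑ n ∈ Icc 1 N, a n * g (S^[n + k] y)‖ ^ 2
          ≤ (N : ℝ)⁻¹ ^ 2 * (((N : ℝ) * W N) ^ 2 * ∑ k ∈ range L, ‖g (S^[k] y)‖ ^ 2) := by
            refine mul_le_mul_of_nonneg_left ?_ (by positivity)
            exact hcore
        _ ≤ (N : ℝ)⁻¹ ^ 2 * (((N : ℝ) * W N) ^ 2 * ((L : ℝ) * D' ^ 2)) := by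
            refine mul_le_mul_of_nonneg_left ?_ (by positivity)
            refine mul_le_mul_of_nonneg_left hcbound (by positivity)
        _ = 2 * N * D' ^ 2 * W N ^ 2 := by
            rw [hLcast]
            field_simp
    -- integration
    set v : ℕ → Y → ℂ := fun k y => (N : ℂ)⁻¹ * ∑ n ∈ Icc 1 N, a n * g (S^[n + k] y) with hv_def
    have hvmeas : ∀ k, Measurable (v k) := by
      intro k
      apply Measurable.const_mul
      exact Finset.measurable_sum _ fun n _ =>
        (hg.comp (hS.measurable.iterate (n + k))).const_mul (a n)
    have hushift : ∀ k, ∫⁻ y, ENNReal.ofReal (‖v k y‖ ^ 2) ∂ν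
        = ∫⁻ y, ENNReal.ofReal (‖v 0 y‖ ^ 2) ∂ν := by
      intro k
      have hvk : ∀ y, v k y = v 0 (S^[k] y) := by
        intro y
        simp only [hv_def, Nat.add_zero]
        congr 1
        exact Finset.sum_congr rfl fun n _ => by rw [Function.iterate_add_apply]
      calc ∫⁻ y, ENNReal.ofReal (‖v k y‖ ^ 2) ∂ν
          = ∫⁻ y, ENNReal.ofReal (‖v 0 (S^[k] y)‖ ^ 2) ∂ν := by simp only [hvk]
        _ = ∫⁻ y, ENNReal.ofReal (‖v 0 y‖ ^ 2) ∂ν :=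
            (hS.iterate k).lintegral_comp (((hvmeas 0).norm.pow_const 2).ennreal_ofReal)
    have hintsum : (N : ENNReal) * ∫⁻ y, ENNReal.ofReal (‖v 0 y‖ ^ 2) ∂ν
        ≤ ENNReal.ofReal (2 * N * D' ^ 2 * W N ^ 2) := by
      have h1 : ∫⁻ y, ∑ k ∈ range N, ENNReal.ofReal (‖v k y‖ ^ 2) ∂ν
          ≤ ENNReal.ofReal (2 * N * D' ^ 2 * W N ^ 2) := by
        have h2 : ∀ y, ∑ k ∈ range N, ENNReal.ofReal (‖v k y‖ ^ 2)
            ≤ ENNReal.ofReal (2 * N * D' ^ 2 * W N ^ 2) := by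
          intro y
          rw [← ENNReal.ofReal_sum_of_nonneg (fun k _ => sq_nonneg _)]
          exact ENNReal.ofReal_le_ofReal (hpt y)
        calc ∫⁻ y, ∑ k ∈ range N, ENNReal.ofReal (‖v k y‖ ^ 2) ∂ν
            ≤ ∫⁻ _, ENNReal.ofReal (2 * N * D' ^ 2 * W N ^ 2) ∂ν := lintegral_mono h2
          _ = ENNReal.ofReal (2 * N * D' ^ 2 * W N ^ 2) := by
              rw [lintegral_const, measure_univ, mul_one]
      rw [lintegral_finset_sum _ (fun k _ => ((hvmeas k).norm.pow_const 2).ennreal_ofReal)] at h1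
      have h3 : ∀ k ∈ range N, (∫⁻ y, ENNReal.ofReal (‖v k y‖ ^ 2) ∂ν)
          = ∫⁻ y, ENNReal.ofReal (‖v 0 y‖ ^ 2) ∂ν := fun k _ => hushift k
      rwa [Finset.sum_congr rfl h3, Finset.sum_const, card_range, nsmul_eq_mul] at h1
    have hfinal : ∫⁻ y, ENNReal.ofReal (‖v 0 y‖ ^ 2) ∂ν
        ≤ ENNReal.ofReal ((Real.sqrt 2 * D' * W N) ^ 2) := by
      have hrw : ENNReal.ofReal (2 * N * D' ^ 2 * W N ^ 2)
          = (N : ENNReal) * ENNReal.ofReal ((Real.sqrt 2 * D' * W N) ^ 2) := by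
        rw [← ENNReal.ofReal_natCast N, ← ENNReal.ofReal_mul (by positivity)]
        congr 1
        rw [mul_pow, mul_pow, Real.sq_sqrt (by norm_num : (0:ℝ) ≤ 2)]
        ring
      rw [hrw] at hintsum
      exact (ENNReal.mul_le_mul_iff_right (by exact_mod_cast (by omega : N ≠ 0))
        (ENNReal.natCast_ne_top N)).mp hintsum
    have hB0 : 0 ≤ Real.sqrt 2 * D' * W N :=
      mul_nonneg (mul_nonneg (Real.sqrt_nonneg 2) hD'0) (hW0 N)
    have hle := eLpNorm_le_of_sq ν (v 0) (Real.sqrt 2 * D' * W N) hB0 hfinal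
    have hveq : (fun y => (N : ℂ)⁻¹ * ∑ n ∈ Icc 1 N, a n * g (S^[n] y)) = v 0 := by
      funext y
      simp [hv_def]
    rw [hveq]
    exact hle
  -- conclude by squeeze
  refine tendsto_of_tendsto_of_tendsto_of_le_of_le' (f := fun N : ℕ =>
      eLpNorm (fun y => (N : ℂ)⁻¹ * ∑ n ∈ Icc 1 N, a n * g (S^[n] y)) 2 ν)
    (g := fun _ : ℕ => (0 : ENNReal)) (h := fun N : ℕ => ENNReal.ofReal (Real.sqrt 2 * D' * W N))
    tendsto_const_nhds ?_ (Eventually.of_forall fun _ => zero_le) ?_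
  · have h1 : Tendsto (fun N : ℕ => Real.sqrt 2 * D' * W N) atTop (nhds 0) := by
      simpa only [mul_zero] using hWW.const_mul (Real.sqrt 2 * D')
    simpa only [ENNReal.ofReal_zero] using ENNReal.tendsto_ofReal h1
  · filter_upwards [eventually_ge_atTop 1] with N hN
    exact keybound N hN
end

section
/- (Well-definedness of the second seminorm) Let (X, 𝓕, μ, T) be a measure-preserving system on a probability space and f ∈ L^∞(μ). Then the limit lim_{H→∞} (1/H) ∑_{h=1}^{H} |∫_X f · conj(f∘T^h) dμ|² exists. Consequently the quantity |||f|||₂ defined by |||f|||₂⁴ = lim_{H→∞} (1/H) ∑_{h=1}^{H} |∫ f · conj(f∘T^h) dμ|² is well defined. -/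
open MeasureTheory Filter Finset
open scoped Topology

local notation "⟪" x ", " y "⟫" => @inner ℂ _ _ x y

/-- **Well-definedness of the second Host–Kra seminorm.**  For a probability
measure-preserving system `(X, μ, T)` and `f ∈ L^∞(μ)`, the limit
`lim_H (1/H) ∑_{h=1}^H |∫ f ⬝ conj (f ∘ T^h) dμ|²` exists; consequently `|||f|||₂`,
defined by `|||f|||₂⁴ = lim_H (1/H) ∑_{h=1}^H |∫ f ⬝ conj (f ∘ T^h) dμ|²`, is well
defined. -/
theorem second_seminorm_well_defined
    {X : Type} [MeasurableSpace X] (μ : Measure X) [IsProbabilityMeasure μ]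
    (T : X → X) (hT : MeasurePreserving T μ μ)
    (f : X → ℂ) (hfm : Measurable f) (hfb : ∃ C : ℝ, ∀ x, ‖f x‖ ≤ C) :
    ∃ L : ℝ,
      Tendsto
        (fun H : ℕ => (H : ℝ)⁻¹ * ∑ h ∈ Icc 1 H,
          ‖∫ x, f x * (starRingEnd ℂ) (f (T^[h] x)) ∂μ‖ ^ 2)
        atTop (nhds L) := by
  classical
  obtain ⟨C0, hC'⟩ := hfb
  set C : ℝ := max C0 0 with hCdef
  have hC : ∀ x, ‖f x‖ ≤ C := fun x => le_trans (hC' x) (le_max_left _ _)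
  have hC0 : 0 ≤ C := le_max_right _ _
  set ν : Measure (X × X) := μ.prod μ with hν
  set S : X × X → X × X := Prod.map T T with hSdef
  have hSmp : MeasurePreserving S ν ν := hT.prod hT
  set F : X × X → ℂ := fun p => f p.1 * (starRingEnd ℂ) (f p.2) with hFdef
  have hFm : Measurable F := by
    have : Measurable fun p : X × X => (starRingEnd ℂ) (f p.2) :=
      Complex.continuous_conj.measurable.comp (hfm.comp measurable_snd)
    exact (hfm.comp measurable_fst).mul this
  have hFmem : MemLp F 2 ν := by
    refine MemLp.of_bound hFm.aestronglyMeasurable (C * C) (ae_of_all _ fun p => ?_)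
    calc ‖F p‖ = ‖f p.1‖ * ‖f p.2‖ := by
          simp [hFdef, norm_mul]
      _ ≤ C * C := mul_le_mul (hC _) (hC _) (norm_nonneg _) hC0
  haveI : Fact ((1 : ENNReal) ≤ 2) := ⟨one_le_two⟩
  set Fm : Lp ℂ 2 ν := hFmem.toLp F with hFm'
  set U : Lp ℂ 2 ν →ₗᵢ[ℂ] Lp ℂ 2 ν := Lp.compMeasurePreservingₗᵢ ℂ S hSmp with hU
  set Uc : Lp ℂ 2 ν →L[ℂ] Lp ℂ 2 ν := U.toContinuousLinearMap with hUc
  -- a.e. description of iterates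
  have key_ae : ∀ n : ℕ, (Uc^[n] Fm : Lp ℂ 2 ν) =ᵐ[ν] F ∘ S^[n] := by
    intro n
    induction n with
    | zero => simpa using hFmem.coeFn_toLp
    | succ n ih =>
        rw [Function.iterate_succ_apply']
        have h1 : (Uc (Uc^[n] Fm) : Lp ℂ 2 ν) =ᵐ[ν] (Uc^[n] Fm : Lp ℂ 2 ν) ∘ S :=
          Lp.coeFn_compMeasurePreserving _ hSmp
        have h2 : ((Uc^[n] Fm : Lp ℂ 2 ν) : X × X → ℂ) ∘ S =ᵐ[ν] (F ∘ S^[n]) ∘ S :=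
          hSmp.quasiMeasurePreserving.ae_eq_comp ih
        refine (h1.trans h2).trans (ae_of_all _ fun p => ?_)
        simp [Function.comp, ← Function.iterate_succ_apply, Function.iterate_succ_apply']
  -- the correlation sequence
  set γ : ℕ → ℂ := fun h => ∫ x, f x * (starRingEnd ℂ) (f (T^[h] x)) ∂μ with hγ
  -- inner products with iterates
  have key_inner : ∀ n : ℕ,
      ⟪Fm, (Uc^[n] Fm)⟫ = ((‖γ n‖ ^ 2 : ℝ) : ℂ) := by
    intro n
    have := MeasureTheory.L2.inner_def (𝕜 := ℂ) Fm (Uc^[n] Fm)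
    rw [this]
    have hae : (fun a => ⟪Fm a, (Uc^[n] Fm : Lp ℂ 2 ν) a⟫) =ᵐ[ν]
        fun a => (starRingEnd ℂ) (F a) * F (S^[n] a) := by
      filter_upwards [hFmem.coeFn_toLp, key_ae n] with a h1 h2
      rw [RCLike.inner_apply, h1, h2]
      exact mul_comm _ _
    rw [integral_congr_ae hae]
    have hiter : S^[n] = Prod.map T^[n] T^[n] := Prod.map_iterate T T n
    have heq : (fun a : X × X => (starRingEnd ℂ) (F a) * F (S^[n] a)) =
        fun a : X × X => ((starRingEnd ℂ) (f a.1) * f (T^[n] a.1)) *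
          (f a.2 * (starRingEnd ℂ) (f (T^[n] a.2))) := by
      funext a
      rw [hiter]
      simp only [hFdef, Prod.map_fst, Prod.map_snd, map_mul, RingHom.id_apply,
        RingHomCompTriple.comp_apply, Complex.conj_conj]
      ring
    have hfub := MeasureTheory.integral_prod_mul (μ := μ) (ν := μ)
      (fun x => (starRingEnd ℂ) (f x) * f (T^[n] x))
      (fun y => f y * (starRingEnd ℂ) (f (T^[n] y)))
    rw [heq, hν]
    rw [show (∫ (a : X × X), (starRingEnd ℂ) (f a.1) * f (T^[n] a.1) *
        (f a.2 * (starRingEnd ℂ) (f (T^[n] a.2))) ∂μ.prod μ) =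
        (∫ x, (starRingEnd ℂ) (f x) * f (T^[n] x) ∂μ) *
        ∫ y, f y * (starRingEnd ℂ) (f (T^[n] y)) ∂μ from hfub]
    have h1 : ∫ x, (starRingEnd ℂ) (f x) * f (T^[n] x) ∂μ = (starRingEnd ℂ) (γ n) := by
      rw [hγ, ← integral_conj]
      congr 1; funext x; simp [mul_comm]
    rw [h1]
    have : (starRingEnd ℂ) (γ n) * γ n = ((‖γ n‖ ^ 2 : ℝ) : ℂ) := by
      rw [mul_comm, Complex.mul_conj, Complex.normSq_eq_norm_sq]
    simpa [hγ] using this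
  -- mean ergodic theorem applied to `Uc Fm`
  have hMET := Uc.tendsto_birkhoffAverage_orthogonalProjection
    U.norm_toContinuousLinearMap_le (Uc Fm)
  set P : Lp ℂ 2 ν :=
    ((LinearMap.eqLocus (Uc : Lp ℂ 2 ν →ₗ[ℂ] Lp ℂ 2 ν)
      ((1 : Lp ℂ 2 ν →L[ℂ] Lp ℂ 2 ν) : Lp ℂ 2 ν →ₗ[ℂ] Lp ℂ 2 ν)).orthogonalProjectionOnto (Uc Fm) : Lp ℂ 2 ν) with hP
  have hinner : Tendsto (fun n => ⟪Fm, birkhoffAverage ℂ Uc _root_.id n (Uc Fm)⟫)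
      atTop (𝓝 ⟪Fm, P⟫) := by
    exact ((continuous_const.inner continuous_id).tendsto P).comp hMET
  -- identify the inner products of Birkhoff averages with our averages
  have hterm : ∀ n : ℕ,
      ⟪Fm, birkhoffAverage ℂ Uc _root_.id n (Uc Fm)⟫ =
        ((n : ℂ))⁻¹ * ∑ h ∈ Icc 1 n, ((‖γ h‖ ^ 2 : ℝ) : ℂ) := by
    intro n
    rw [birkhoffAverage, birkhoffSum, inner_smul_right, inner_sum]
    congr 1
    have : ∀ i, ⟪Fm, _root_.id (Uc^[i] (Uc Fm))⟫ = ((‖γ (1 + i)‖ ^ 2 : ℝ) : ℂ) := by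
      intro i
      have : Uc^[i] (Uc Fm) = Uc^[1 + i] Fm := by
        rw [add_comm, Function.iterate_add_apply, Function.iterate_one]
      rw [_root_.id, this, key_inner]
    simp only [this]
    rw [show Icc 1 n = Ico 1 (n + 1) by rw [Finset.Ico_add_one_right_eq_Icc],
      Finset.sum_Ico_eq_sum_range]
    simp
  -- conclude
  refine ⟨⟪Fm, P⟫.re, ?_⟩
  have : Tendsto (fun n => (⟪Fm, birkhoffAverage ℂ Uc _root_.id n (Uc Fm)⟫).re)
      atTop (𝓝 ⟪Fm, P⟫.re) := (Complex.continuous_re.tendsto _).comp hinner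
  refine this.congr fun n => ?_
  rw [hterm n]
  have : ((n : ℂ))⁻¹ * ∑ h ∈ Icc 1 n, ((‖γ h‖ ^ 2 : ℝ) : ℂ) =
      (((n : ℝ)⁻¹ * ∑ h ∈ Icc 1 n, ‖γ h‖ ^ 2 : ℝ) : ℂ) := by
    push_cast
    ring
  rw [this, Complex.ofReal_re]
end
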